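/- Let {U_λ}_{λ>0} be a family of piecewise continuous real-valued functions on [0, ‖A‖²] satisfying: (i) each U_λ is bounded, (ii) 0 ≤ μ U_λ(μ) ≤ 1 for all μ, and (iii) μ U_λ(μ) → 1 as λ → 0⁺ for each μ ∈ (0, ‖A‖²]. Then the family of operators R_λ = U_λ(A*A) A* is a regularization algorithm: each R_λ is bounded, and for every g in the range of A, R_λ g converges to the minimal-norm solution f⁺ as λ → 0⁺. -/

import Mathlib

open scoped InnerProductSpace
open Filter

section Aux

variable {E : Type*} [NormedAddCommGroup E] [InnerProductSpace ℝ E]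

lemma aux_coeff {v : ℕ → E} (hv : Orthonormal ℝ v) {a : ℕ → ℝ} {x : E}
    (h : HasSum (fun j => a j • v j) x) (j : ℕ) : ⟪x, v j⟫_ℝ = a j := by
  have h1 := h.mapL (innerSL ℝ (v j))
  have hite := orthonormal_iff_ite.mp hv
  have h2 : ∀ k, (innerSL ℝ (v j)) (a k • v k) = if k = j then a j else 0 := by
    intro k
    simp only [innerSL_apply_apply, real_inner_smul_right, hite j k]
    rcases eq_or_ne k j with rfl | hk
    · simp
    · simp [hk, Ne.symm hk]
  simp only [h2] at h1
  rw [real_inner_comm]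
  exact h1.unique (hasSum_ite_eq j (a j))

lemma aux_parseval {v : ℕ → E} (hv : Orthonormal ℝ v) {a : ℕ → ℝ} {x : E}
    (h : HasSum (fun j => a j • v j) x) : HasSum (fun j => a j ^ 2) (‖x‖ ^ 2) := by
  have h1 := h.mapL (innerSL ℝ x)
  have h2 : ∀ k, (innerSL ℝ x) (a k • v k) = a k ^ 2 := by
    intro k
    simp only [innerSL_apply_apply, real_inner_smul_right, aux_coeff hv h k]
    ring
  simp only [h2] at h1
  simpa [real_inner_self_eq_norm_sq] using h1

lemma aux_summable [CompleteSpace E] {v : ℕ → E} (hv : Orthonormal ℝ v) {a : ℕ → ℝ}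
    (ha : Summable fun j => a j ^ 2) : Summable fun j => a j • v j := by
  have := (hv.orthogonalFamily.summable_iff_norm_sq_summable a).mpr (by
    simpa only [Real.norm_eq_abs, sq_abs] using ha)
  simpa [LinearIsometry.toSpanSingleton, LinearMap.toSpanSingleton] using this

lemma aux_bessel {v : ℕ → E} (hv : Orthonormal ℝ v) (x : E) :
    Summable (fun j => ⟪x, v j⟫_ℝ ^ 2) ∧ ∑' j, ⟪x, v j⟫_ℝ ^ 2 ≤ ‖x‖ ^ 2 := by
  have h1 := hv.inner_products_summable x
  have h2 := hv.tsum_inner_products_le x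
  simp only [Real.norm_eq_abs, sq_abs] at h1 h2
  constructor
  · exact h1.congr fun j => by rw [real_inner_comm]
  · calc ∑' j, ⟪x, v j⟫_ℝ ^ 2 = ∑' j, ⟪v j, x⟫_ℝ ^ 2 := by
          exact tsum_congr fun j => by rw [real_inner_comm]
      _ ≤ ‖x‖ ^ 2 := h2

end Aux

/-- Spectral windows give regularization algorithms: if `0 ≤ μ U_λ(μ) ≤ 1` on
`[0,‖A‖²]`, each `U_λ` is bounded there, and `μ U_λ(μ) → 1` as `λ → 0⁺` for
`μ ∈ (0,‖A‖²]`, then `R_λ = U_λ(A*A) A*` (expressed via the singular system as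
`R_λ g = Σ_j σ_j U_λ(σ_j²) ⟪g,u_j⟫ v_j`) is bounded for each `λ > 0`, and for every
`g = A f⁺` in the range of `A` with `f⁺ ⊥ N(A)` (the minimal-norm solution),
`R_λ g → f⁺` as `λ → 0⁺`. -/
theorem spectral_window_regularization
    {X Y : Type*} [NormedAddCommGroup X] [InnerProductSpace ℝ X] [CompleteSpace X]
    [NormedAddCommGroup Y] [InnerProductSpace ℝ Y] [CompleteSpace Y]
    (A : X →L[ℝ] Y) (hcomp : IsCompactOperator (A : X → Y))
    (σ : ℕ → ℝ) (v : ℕ → X) (u : ℕ → Y)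
    (hσ : ∀ j, 0 < σ j) (hv : Orthonormal ℝ v) (hu : Orthonormal ℝ u)
    (hA : ∀ f : X, HasSum (fun j => (σ j * ⟪f, v j⟫_ℝ) • u j) (A f))
    (U : ℝ → ℝ → ℝ)
    (hbound : ∀ lam : ℝ, 0 < lam → ∃ c : ℝ, ∀ μ ∈ Set.Icc (0:ℝ) (‖A‖ ^ 2), |U lam μ| ≤ c)
    (hwindow : ∀ lam : ℝ, 0 < lam → ∀ μ ∈ Set.Icc (0:ℝ) (‖A‖ ^ 2),
      0 ≤ μ * U lam μ ∧ μ * U lam μ ≤ 1)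
    (hconv : ∀ μ ∈ Set.Ioc (0:ℝ) (‖A‖ ^ 2),
      Tendsto (fun lam : ℝ => μ * U lam μ) (nhdsWithin 0 (Set.Ioi 0)) (nhds 1)) :
    (∀ lam : ℝ, 0 < lam → ∃ C : ℝ, ∀ g : Y, ∃ x : X,
      HasSum (fun j => (σ j * U lam (σ j ^ 2) * ⟪g, u j⟫_ℝ) • v j) x ∧ ‖x‖ ≤ C * ‖g‖) ∧
    (∀ fplus : X, (∀ z : X, A z = 0 → ⟪fplus, z⟫_ℝ = 0) →
      ∀ r : ℝ → X,
      (∀ lam : ℝ, 0 < lam →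
        HasSum (fun j => (σ j * U lam (σ j ^ 2) * ⟪A fplus, u j⟫_ℝ) • v j) (r lam)) →
      Tendsto r (nhdsWithin 0 (Set.Ioi 0)) (nhds fplus)) := by
  -- A (v j) = σ j • u j, hence σ j ≤ ‖A‖
  have hAv : ∀ j, A (v j) = σ j • u j := by
    intro j
    have h1 := hA (v j)
    have hite := orthonormal_iff_ite.mp hv
    have h2 : ∀ k, (σ k * ⟪v j, v k⟫_ℝ) • u k = if k = j then σ j • u j else 0 := by
      intro k
      rw [hite j k]
      rcases eq_or_ne k j with rfl | hk
      · simp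
      · simp [hk, Ne.symm hk]
    simp only [h2] at h1
    exact h1.unique (hasSum_ite_eq j (σ j • u j))
  have hσA : ∀ j, σ j ≤ ‖A‖ := by
    intro j
    have h1 : ‖A (v j)‖ ≤ ‖A‖ * ‖v j‖ := A.le_opNorm (v j)
    rw [hAv j, norm_smul, hu.1 j, Real.norm_eq_abs, abs_of_pos (hσ j), mul_one] at h1
    rwa [hv.1 j, mul_one] at h1
  have hσsq : ∀ j, σ j ^ 2 ∈ Set.Icc (0:ℝ) (‖A‖ ^ 2) :=
    fun j => ⟨sq_nonneg _, pow_le_pow_left₀ (hσ j).le (hσA j) 2⟩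
  constructor
  · -- boundedness
    intro lam hlam
    obtain ⟨c, hc⟩ := hbound lam hlam
    have hc0 : 0 ≤ c := le_trans (abs_nonneg _) (hc 0 ⟨le_refl _, sq_nonneg _⟩)
    refine ⟨‖A‖ * c, fun g => ?_⟩
    set a : ℕ → ℝ := fun j => σ j * U lam (σ j ^ 2) * ⟪g, u j⟫_ℝ with ha_def
    have habs : ∀ j, a j ^ 2 ≤ (‖A‖ * c) ^ 2 * ⟪g, u j⟫_ℝ ^ 2 := by
      intro j
      have h1 : |a j| ≤ (‖A‖ * c) * |⟪g, u j⟫_ℝ| := by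
        have e1 : |a j| = |σ j| * |U lam (σ j ^ 2)| * |⟪g, u j⟫_ℝ| := by
          rw [ha_def]; simp [abs_mul]
        rw [e1]
        have e2 : |σ j| * |U lam (σ j ^ 2)| ≤ ‖A‖ * c :=
          mul_le_mul (by rw [abs_of_pos (hσ j)]; exact hσA j) (hc _ (hσsq j))
            (abs_nonneg _) (norm_nonneg A)
        exact mul_le_mul_of_nonneg_right e2 (abs_nonneg _)
      calc a j ^ 2 = |a j| ^ 2 := (sq_abs _).symm
        _ ≤ ((‖A‖ * c) * |⟪g, u j⟫_ℝ|) ^ 2 := by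
            apply pow_le_pow_left₀ (abs_nonneg _) h1
        _ = (‖A‖ * c) ^ 2 * ⟪g, u j⟫_ℝ ^ 2 := by rw [mul_pow, sq_abs]
    obtain ⟨hbes, hbes2⟩ := aux_bessel hu g
    have hsum2 : Summable fun j => a j ^ 2 :=
      Summable.of_nonneg_of_le (fun j => sq_nonneg _) habs (hbes.mul_left _)
    have hsum : Summable fun j => a j • v j := aux_summable hv hsum2
    refine ⟨∑' j, a j • v j, hsum.hasSum, ?_⟩
    have hpar := aux_parseval hv hsum.hasSum
    have h3 : ‖∑' j, a j • v j‖ ^ 2 ≤ (‖A‖ * c * ‖g‖) ^ 2 := by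
      rw [← hpar.tsum_eq]
      calc ∑' j, a j ^ 2 ≤ ∑' j, (‖A‖ * c) ^ 2 * ⟪g, u j⟫_ℝ ^ 2 :=
            Summable.tsum_le_tsum habs hsum2 (hbes.mul_left _)
        _ = (‖A‖ * c) ^ 2 * ∑' j, ⟪g, u j⟫_ℝ ^ 2 := tsum_mul_left
        _ ≤ (‖A‖ * c) ^ 2 * ‖g‖ ^ 2 := by
            apply mul_le_mul_of_nonneg_left hbes2 (sq_nonneg _)
        _ = (‖A‖ * c * ‖g‖) ^ 2 := by ring
    have h4 : (0:ℝ) ≤ ‖A‖ * c * ‖g‖ :=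
      mul_nonneg (mul_nonneg (norm_nonneg _) hc0) (norm_nonneg _)
    calc ‖∑' j, a j • v j‖ ≤ ‖A‖ * c * ‖g‖ := by
          nlinarith [norm_nonneg (∑' j, a j • v j)]
      _ = ‖A‖ * c * ‖g‖ := rfl
  · -- convergence
    intro fplus hperp r hr
    set c : ℕ → ℝ := fun j => ⟪fplus, v j⟫_ℝ with hc_def
    obtain ⟨hbes, hbes2⟩ := aux_bessel hv fplus
    -- fplus = Σ c j • v j
    have hsum : Summable fun j => c j • v j := aux_summable hv hbes
    set x : X := ∑' j, c j • v j with hx_def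
    have hx : HasSum (fun j => c j • v j) x := hsum.hasSum
    have hfx : fplus = x := by
      set w : X := fplus - x with hw_def
      have hwv : ∀ j, ⟪w, v j⟫_ℝ = 0 := by
        intro j
        rw [hw_def, inner_sub_left, aux_coeff hv hx j, hc_def, sub_self]
      have hAw : A w = 0 := by
        have h1 := hA w
        have h2 : ∀ k, (σ k * ⟪w, v k⟫_ℝ) • u k = 0 := fun k => by
          rw [hwv k]; simp
        simp only [h2] at h1
        exact h1.unique hasSum_zero
      have h3 : ⟪fplus, w⟫_ℝ = 0 := hperp w hAw
      have h4 : ⟪x, w⟫_ℝ = 0 := by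
        have h5 := hx.mapL (innerSL ℝ w)
        have h6 : ∀ k, (innerSL ℝ w) (c k • v k) = 0 := fun k => by
          simp [real_inner_smul_right, hwv k]
        simp only [h6] at h5
        rw [real_inner_comm]
        exact h5.unique hasSum_zero
      have h7 : ⟪w, w⟫_ℝ = 0 := by
        rw [hw_def]
        rw [inner_sub_left]
        rw [← hw_def, h3, h4]
        ring
      have := inner_self_eq_zero.mp (by exact_mod_cast h7)
      rw [hw_def] at this
      exact (sub_eq_zero.mp this)
    have hcoefA : ∀ j, ⟪A fplus, u j⟫_ℝ = σ j * c j := fun j => aux_coeff hu (hA fplus) j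
    set φ : ℝ → ℕ → ℝ := fun lam j => σ j ^ 2 * U lam (σ j ^ 2) with hφ_def
    have hrw : ∀ lam, 0 < lam → HasSum (fun j => (φ lam j * c j) • v j) (r lam) := by
      intro lam hl
      have h1 := hr lam hl
      have h2 : (fun j => (σ j * U lam (σ j ^ 2) * ⟪A fplus, u j⟫_ℝ) • v j)
          = fun j => (φ lam j * c j) • v j := by
        funext j
        rw [hcoefA j]
        show _ = ((σ j ^ 2 * U lam (σ j ^ 2)) * c j) • v j
        congr 1; ring
      rwa [h2] at h1
    have hxf : HasSum (fun j => c j • v j) fplus := by rw [hfx]; exact hx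
    have hdiff : ∀ lam, 0 < lam →
        HasSum (fun j => ((φ lam j - 1) * c j) • v j) (r lam - fplus) := by
      intro lam hl
      have h1 := (hrw lam hl).sub hxf
      have h2 : (fun j => ((φ lam j - 1) * c j) • v j)
          = fun j => (φ lam j * c j) • v j - c j • v j := by
        funext j; rw [sub_mul, one_mul, sub_smul]
      rwa [h2]
    have hF : ∀ lam, 0 < lam →
        HasSum (fun j => ((φ lam j - 1) * c j) ^ 2) (‖r lam - fplus‖ ^ 2) :=
      fun lam hl => aux_parseval hv (hdiff lam hl)
    have hten : Tendsto (fun lam => ∑' j, ((φ lam j - 1) * c j) ^ 2)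
        (nhdsWithin 0 (Set.Ioi 0)) (nhds (∑' (_ : ℕ), (0:ℝ))) := by
      apply tendsto_tsum_of_dominated_convergence (bound := fun j => c j ^ 2) hbes
      · intro j
        have h1 : Tendsto (fun lam => φ lam j) (nhdsWithin 0 (Set.Ioi 0)) (nhds 1) :=
          hconv (σ j ^ 2) ⟨pow_pos (hσ j) 2, (hσsq j).2⟩
        have h2 : Tendsto (fun lam => ((φ lam j - 1) * c j) ^ 2) (nhdsWithin 0 (Set.Ioi 0))
            (nhds ((((1:ℝ) - 1) * c j) ^ 2)) :=
          Tendsto.pow ((h1.sub tendsto_const_nhds).mul_const (c j)) 2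
        simpa using h2
      · filter_upwards [self_mem_nhdsWithin] with lam hl
        intro j
        have hw := hwindow lam hl (σ j ^ 2) (hσsq j)
        have hφeq : φ lam j = σ j ^ 2 * U lam (σ j ^ 2) := rfl
        have habs : |φ lam j - 1| ≤ 1 :=
          abs_le.mpr ⟨by rw [hφeq]; linarith [hw.1], by rw [hφeq]; linarith [hw.2]⟩
        rw [Real.norm_eq_abs, abs_of_nonneg (sq_nonneg _)]
        calc ((φ lam j - 1) * c j) ^ 2 = (φ lam j - 1) ^ 2 * c j ^ 2 := by ring
          _ ≤ 1 * c j ^ 2 := by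
              apply mul_le_mul_of_nonneg_right _ (sq_nonneg _)
              calc (φ lam j - 1) ^ 2 = |φ lam j - 1| ^ 2 := (sq_abs _).symm
                _ ≤ 1 ^ 2 := pow_le_pow_left₀ (abs_nonneg _) habs 2
                _ = 1 := one_pow 2
          _ = c j ^ 2 := one_mul _
    rw [tsum_zero] at hten
    have hten2 : Tendsto (fun lam => ‖r lam - fplus‖ ^ 2) (nhdsWithin 0 (Set.Ioi 0)) (nhds 0) := by
      apply hten.congr'
      filter_upwards [self_mem_nhdsWithin] with lam hl
      exact (hF lam hl).tsum_eq
    have hten3 : Tendsto (fun lam => ‖r lam - fplus‖) (nhdsWithin 0 (Set.Ioi 0)) (nhds 0) := by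
      have h1 := hten2.sqrt
      have h2 : (fun lam => Real.sqrt (‖r lam - fplus‖ ^ 2)) = fun lam => ‖r lam - fplus‖ :=
        funext fun lam => Real.sqrt_sq (norm_nonneg _)
      rwa [h2, Real.sqrt_zero] at h1
    exact tendsto_iff_norm_sub_tendsto_zero.mpr hten3
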